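/- Let V be a finite-dimensional complex inner product space and X, Y, Z pairwise orthogonal subspaces with X + Y + Z = V (orthogonal sum). Suppose Y₁ ≤ X + Y is adjacent to X with the same dimension as X, Z₁ is the orthogonal complement of Y₁ in X + Y. Then Z₁ is adjacent to Y and Z₁ is orthogonal to Z. -/

import Mathlib

/-- Let `X, Y, Z` be pairwise orthogonal subspaces of a finite-dimensional complex
inner product space `V` with `X + Y + Z = V`. If `Y₁ ≤ X + Y` is adjacent to `X`
(same dimension, codimension-one intersection) and `Z₁` is the orthogonal complement
of `Y₁` in `X + Y`, then `Z₁` is adjacent to `Y` and `Z₁` is orthogonal to `Z`. -/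
theorem stmt_12 {V : Type*} [NormedAddCommGroup V] [InnerProductSpace ℂ V]
    [FiniteDimensional ℂ V]
    (X Y Z : Submodule ℂ V)
    (hXY : Submodule.IsOrtho X Y) (hXZ : Submodule.IsOrtho X Z)
    (hYZ : Submodule.IsOrtho Y Z)
    (hsup : X ⊔ Y ⊔ Z = ⊤)
    (hXpos : 1 ≤ Module.finrank ℂ X)
    (Y₁ : Submodule ℂ V) (hY₁ : Y₁ ≤ X ⊔ Y)
    (hY₁dim : Module.finrank ℂ Y₁ = Module.finrank ℂ X)
    (hY₁adj : Module.finrank ℂ ↥(Y₁ ⊓ X) + 1 = Module.finrank ℂ X)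
    (Z₁ : Submodule ℂ V) (hZ₁ : Z₁ = Y₁ᗮ ⊓ (X ⊔ Y)) :
    (Module.finrank ℂ Z₁ = Module.finrank ℂ Y ∧
      Module.finrank ℂ ↥(Z₁ ⊓ Y) + 1 = Module.finrank ℂ Y) ∧
    Submodule.IsOrtho Z₁ Z := by
  have hXYdisj : X ⊓ Y = ⊥ := (hXY.disjoint).eq_bot
  -- dim (X ⊔ Y) = dim X + dim Y
  have hsupXY : Module.finrank ℂ ↥(X ⊔ Y) = Module.finrank ℂ X + Module.finrank ℂ Y := by
    have := Submodule.finrank_sup_add_finrank_inf_eq X Y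
    rw [hXYdisj, finrank_bot] at this
    omega
  -- dim Z₁ = dim Y
  have hZ₁dim : Module.finrank ℂ Z₁ = Module.finrank ℂ Y := by
    have h := Submodule.finrank_add_inf_finrank_orthogonal hY₁
    rw [← hZ₁] at h
    omega
  -- Z₁ ⊓ Y = Y₁ᗮ ⊓ Y
  have hZ₁Y : Z₁ ⊓ Y = Y₁ᗮ ⊓ Y := by
    rw [hZ₁, inf_assoc, inf_eq_right.mpr (le_sup_right : Y ≤ X ⊔ Y)]
  -- Y₁ ⊓ Yᗮ = Y₁ ⊓ X
  have hkey : Y₁ ⊓ Yᗮ = Y₁ ⊓ X := by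
    apply le_antisymm
    · rintro v ⟨hv1, hvO⟩
      obtain ⟨x, hx, y, hy, hxy⟩ := Submodule.mem_sup.mp (hY₁ hv1)
      have hyv : (inner ℂ y v : ℂ) = 0 := (Submodule.mem_orthogonal Y v).mp hvO y hy
      have hyx : (inner ℂ y x : ℂ) = 0 := by
        have := Submodule.isOrtho_iff_inner_eq.mp hXY.symm y hy x hx
        exact this
      have hyy : (inner ℂ y y : ℂ) = 0 := by
        rw [← hxy, inner_add_right, hyx, zero_add] at hyv
        exact hyv
      have hy0 : y = 0 := inner_self_eq_zero.mp hyy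
      refine ⟨hv1, ?_⟩
      rw [← hxy, hy0, add_zero]
      exact hx
    · exact inf_le_inf_left Y₁ hXY
  -- dim (Z₁ ⊓ Y) + 1 = dim Y
  have hadj : Module.finrank ℂ ↥(Z₁ ⊓ Y) + 1 = Module.finrank ℂ Y := by
    have hYo : Y₁ᗮ ⊓ Y = (Y₁ ⊔ Yᗮ)ᗮ := by
      rw [← Submodule.inf_orthogonal, Y.orthogonal_orthogonal]
    have h1 := Submodule.finrank_sup_add_finrank_inf_eq Y₁ Yᗮ
    have h2 := Submodule.finrank_add_finrank_orthogonal (𝕜 := ℂ) (Y₁ ⊔ Yᗮ)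
    have h3 := Submodule.finrank_add_finrank_orthogonal (𝕜 := ℂ) Y
    rw [hkey] at h1
    rw [hZ₁Y, hYo]
    omega
  refine ⟨⟨hZ₁dim, hadj⟩, ?_⟩
  have hle : Z₁ ≤ X ⊔ Y := hZ₁ ▸ inf_le_right
  have : X ⊔ Y ≤ Zᗮ := sup_le hXZ hYZ
  exact hle.trans this
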